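/- If F : (a,∞) → ℝ is convex or concave and lim_{x→∞}[F(x+1) − F(x)] = 0, then any two solutions φ₁, φ₂ : (a,∞) → ℝ of the equation φ(x+1) = φ(x) + F(x) that are both convex (or both concave) on some half-line (b,∞) and agree at one point x₀ > a must be equal on all of (a,∞). -/

import Mathlib

theorem krull_improved_uniqueness (a : EReal) (F : ℝ → ℝ)
    (hF : ConvexOn ℝ {x : ℝ | a < (x : EReal)} F ∨ ConcaveOn ℝ {x : ℝ | a < (x : EReal)} F)
    (hlim : Filter.Tendsto (fun x => F (x + 1) - F x) Filter.atTop (nhds 0))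
    (φ₁ φ₂ : ℝ → ℝ)
    (heq₁ : ∀ x : ℝ, a < (x : EReal) → φ₁ (x + 1) = φ₁ x + F x)
    (heq₂ : ∀ x : ℝ, a < (x : EReal) → φ₂ (x + 1) = φ₂ x + F x)
    (b : ℝ) (hb : a ≤ (b : EReal))
    (hconv : (ConvexOn ℝ (Set.Ioi b) φ₁ ∧ ConvexOn ℝ (Set.Ioi b) φ₂) ∨
             (ConcaveOn ℝ (Set.Ioi b) φ₁ ∧ ConcaveOn ℝ (Set.Ioi b) φ₂))
    (x₀ : ℝ) (hx₀ : a < (x₀ : EReal)) (hagree : φ₁ x₀ = φ₂ x₀) :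
    ∀ x : ℝ, a < (x : EReal) → φ₁ x = φ₂ x := by
  intro y hy
  set g : ℝ → ℝ := fun x => φ₁ x - φ₂ x with hg
  suffices hgy : g y = 0 by
    have : φ₁ y - φ₂ y = 0 := hgy
    linarith
  have hab : ∀ x : ℝ, b < x → a < (x : EReal) := fun x hx =>
    lt_of_le_of_lt hb (by exact_mod_cast hx)
  have gper : ∀ x : ℝ, a < (x : EReal) → g (x + 1) = g x := by
    intro x hx
    simp only [hg]
    rw [heq₁ x hx, heq₂ x hx]; ring
  have gperN : ∀ x : ℝ, a < (x : EReal) → ∀ n : ℕ, g (x + n) = g x := by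
    intro x hx n
    induction n with
    | zero => simp
    | succ n ih =>
      have hxn : a < ((x + n : ℝ) : EReal) := by
        refine lt_of_lt_of_le hx ?_
        exact_mod_cast le_add_of_nonneg_right (by positivity)
      have : x + ((n + 1 : ℕ) : ℝ) = (x + n) + 1 := by push_cast; ring
      rw [this, gper _ hxn, ih]
  -- key slope lemma
  have key : ∀ x t : ℝ, b + 1 < x → 0 ≤ t → t < 1 →
      |g (x + t) - g x| ≤ |F x - F (x - 1)| := by
    intro x t hx ht0 ht1
    rcases eq_or_lt_of_le ht0 with h0 | h0
    · simp [← h0]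
    have ht' : t ≠ 0 := ne_of_gt h0
    have hxb : x ∈ Set.Ioi b := by simp only [Set.mem_Ioi]; linarith
    have hx1b : x + 1 ∈ Set.Ioi b := by simp only [Set.mem_Ioi]; linarith
    have hxtb : x + t ∈ Set.Ioi b := by simp only [Set.mem_Ioi]; linarith
    have hxm1b : x - 1 ∈ Set.Ioi b := by simp only [Set.mem_Ioi]; linarith
    have hax : a < (x : EReal) := hab x (by linarith)
    have haxm1 : a < ((x - 1 : ℝ) : EReal) := hab _ (by linarith)
    have hFa : φ₁ x = φ₁ (x - 1) + F (x - 1) := by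
      have := heq₁ (x - 1) haxm1; rwa [sub_add_cancel] at this
    have hFb : φ₂ x = φ₂ (x - 1) + F (x - 1) := by
      have := heq₂ (x - 1) haxm1; rwa [sub_add_cancel] at this
    have hFc : φ₁ (x + 1) = φ₁ x + F x := heq₁ x hax
    have hFd : φ₂ (x + 1) = φ₂ x + F x := heq₂ x hax
    -- slope bounds for a convex function
    have conv_bd : ∀ φ : ℝ → ℝ, ConvexOn ℝ (Set.Ioi b) φ →
        φ x - φ (x - 1) ≤ (φ (x + t) - φ x) / t ∧
        (φ (x + t) - φ x) / t ≤ φ (x + 1) - φ x := by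
      intro φ hφ
      constructor
      · have := hφ.secant_mono hxb hxm1b hxtb (ne_of_lt (by linarith))
          (ne_of_gt (by linarith)) (by linarith)
        have h1 : (φ (x - 1) - φ x) / (x - 1 - x) = φ x - φ (x - 1) := by
          rw [show x - 1 - x = -(1:ℝ) by ring]; field_simp; ring
        have h2 : (φ (x + t) - φ x) / (x + t - x) = (φ (x + t) - φ x) / t := by
          rw [show x + t - x = t by ring]
        rw [h1, h2] at this; exact this
      · have := hφ.secant_mono hxb hxtb hx1b (ne_of_gt (by linarith))
          (ne_of_gt (by linarith)) (by linarith)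
        have h1 : (φ (x + 1) - φ x) / (x + 1 - x) = φ (x + 1) - φ x := by
          rw [show x + 1 - x = (1:ℝ) by ring]; field_simp
        have h2 : (φ (x + t) - φ x) / (x + t - x) = (φ (x + t) - φ x) / t := by
          rw [show x + t - x = t by ring]
        rw [h1, h2] at this; exact this
    set s₁ := (φ₁ (x + t) - φ₁ x) / t with hs₁
    set s₂ := (φ₂ (x + t) - φ₂ x) / t with hs₂
    have A := le_abs_self (F x - F (x - 1))
    have B := neg_le_abs (F x - F (x - 1))
    have habs : |s₁ - s₂| ≤ |F x - F (x - 1)| := by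
      rcases hconv with ⟨h1, h2⟩ | ⟨h1, h2⟩
      · obtain ⟨l1, u1⟩ := conv_bd φ₁ h1
        obtain ⟨l2, u2⟩ := conv_bd φ₂ h2
        rw [abs_le]; constructor <;> linarith
      · obtain ⟨l1, u1⟩ := conv_bd (-φ₁) h1.neg
        obtain ⟨l2, u2⟩ := conv_bd (-φ₂) h2.neg
        simp only [Pi.neg_apply] at l1 u1 l2 u2
        have e1 : (-φ₁ (x + t) - -φ₁ x) / t = -s₁ := by rw [hs₁]; ring
        have e2 : (-φ₂ (x + t) - -φ₂ x) / t = -s₂ := by rw [hs₂]; ring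
        rw [e1] at l1 u1; rw [e2] at l2 u2
        rw [abs_le]; constructor <;> linarith
    have hgdiff : g (x + t) - g x = t * (s₁ - s₂) := by
      simp only [hg, hs₁, hs₂]
      field_simp
      ring
    rw [hgdiff, abs_mul, abs_of_pos h0]
    calc t * |s₁ - s₂| ≤ t * |F x - F (x - 1)| :=
          mul_le_mul_of_nonneg_left habs h0.le
      _ ≤ |F x - F (x - 1)| := mul_le_of_le_one_left (abs_nonneg _) ht1.le
  -- assemble
  set t := Int.fract (y - x₀) with htdef
  set k := ⌊y - x₀⌋ with hkdef
  have ht0 : 0 ≤ t := Int.fract_nonneg _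
  have ht1 : t < 1 := Int.fract_lt_one _
  have hyk : y = x₀ + (k : ℝ) + t := by
    have := Int.floor_add_fract (y - x₀)
    rw [htdef, hkdef]
    linarith
  have hg0 : g x₀ = 0 := by simp [hg, hagree]
  -- the sequence of bounds tends to 0
  have hseq : Filter.Tendsto (fun n : ℕ => |F (x₀ + k + n) - F (x₀ + k + n - 1)|)
      Filter.atTop (nhds 0) := by
    have h1 : Filter.Tendsto (fun n : ℕ => (x₀ + k + n - 1 : ℝ)) Filter.atTop Filter.atTop := by
      have := Filter.tendsto_atTop_add_const_left Filter.atTop (x₀ + (k : ℝ) - 1)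
        (tendsto_natCast_atTop_atTop (R := ℝ))
      convert this using 2 with n
      ring
    have h2 := hlim.comp h1
    have h3 : Filter.Tendsto (fun n : ℕ => F (x₀ + k + n) - F (x₀ + k + n - 1))
        Filter.atTop (nhds 0) := by
      convert h2 using 2 with n
      simp only [Function.comp_apply]
      ring_nf
    have := h3.abs
    simpa using this
  -- eventual bound
  obtain ⟨N, hN⟩ := exists_nat_ge (max (-(k : ℝ)) (b + 2 - x₀ - k))
  have hev : ∀ᶠ n : ℕ in Filter.atTop, |g y| ≤ |F (x₀ + k + n) - F (x₀ + k + n - 1)| := by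
    filter_upwards [Filter.eventually_ge_atTop N] with n hn
    have hnR : (N : ℝ) ≤ (n : ℝ) := by exact_mod_cast hn
    have hk0 : (0 : ℝ) ≤ (k : ℝ) + n := by
      have := le_trans (le_max_left (-(k:ℝ)) (b + 2 - x₀ - k)) (le_trans hN hnR)
      linarith
    have hbig : b + 1 < x₀ + k + n := by
      have := le_trans (le_max_right (-(k:ℝ)) (b + 2 - x₀ - k)) (le_trans hN hnR)
      linarith
    have hkZ : (0 : ℤ) ≤ k + n := by exact_mod_cast hk0
    have hgx : g (x₀ + (k : ℝ) + n) = 0 := by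
      have hc : x₀ + (k : ℝ) + n = x₀ + ((k + n).toNat : ℕ) := by
        have h := Int.toNat_of_nonneg hkZ
        have h2 : (((k + (n:ℤ)).toNat : ℕ) : ℝ) = (k:ℝ) + n := by
          exact_mod_cast congrArg (Int.cast : ℤ → ℝ) h
        rw [h2]; ring
      rw [hc, gperN x₀ hx₀ _, hg0]
    have hgy2 : g y = g ((x₀ + (k : ℝ) + n) + t) := by
      have : (x₀ + (k : ℝ) + n) + t = y + n := by rw [hyk]; ring
      rw [this, gperN y hy n]
    have := key (x₀ + (k : ℝ) + n) t hbig ht0 ht1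
    rw [hgx, ← hgy2] at this
    simpa using this
  have hfinal : |g y| ≤ 0 := ge_of_tendsto hseq hev
  have hnn := abs_nonneg (g y)
  have : |g y| = 0 := le_antisymm hfinal hnn
  exact abs_eq_zero.mp this
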